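/- Let N(E) = #{(n,k) ∈ ℕ×ℤ : 4n(n+|k|) ≤ E}. Then, as E → +∞, N(E) = (E/4)·log E + (γ − log 2 − 1/2)·(E/2) + O(√E), where γ is the Euler–Mascheroni constant. -/

import Mathlib

open Real Filter Asymptotics

noncomputable def gsg (E : ℝ) (n : ℕ) : ℤ := ⌊E / (4 * n)⌋ - n

lemma gs_ineq_iff (E : ℝ) (n : ℕ) (k : ℤ) (hn : 0 < n) :
    4 * n * ((n : ℝ) + |(k : ℝ)|) ≤ E ↔ |k| ≤ gsg E n := by
  have h4 : (0:ℝ) < 4 * n := by positivity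
  rw [mul_comm, ← le_div_iff₀ h4, gsg, le_sub_iff_add_le, Int.le_floor]
  push_cast
  rw [add_comm]

lemma gs_set_eq (E : ℝ) :
    {p : ℕ × ℤ | 0 < p.1 ∧ (4 * p.1 * ((p.1 : ℝ) + |(p.2 : ℝ)|) ≤ E)} =
    ↑((Finset.Icc 1 ⌊Real.sqrt E / 2⌋₊).biUnion
      fun n => ({n} : Finset ℕ) ×ˢ Finset.Icc (-(gsg E n)) (gsg E n)) := by
  ext ⟨n, k⟩
  simp only [Set.mem_setOf_eq, Finset.mem_coe, Finset.mem_biUnion, Finset.mem_Icc,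
    Finset.mem_product, Finset.mem_singleton, ← abs_le]
  constructor
  · rintro ⟨hn, hle⟩
    refine ⟨n, ⟨hn, ?_⟩, rfl, (gs_ineq_iff E n k hn).mp hle⟩
    -- n ≤ ⌊√E/2⌋₊
    have h1 : (2 * (n:ℝ))^2 ≤ E := by
      nlinarith [abs_nonneg ((k:ℝ)), (by exact_mod_cast hn : (1:ℝ) ≤ n)]
    have hE : (0:ℝ) ≤ E := le_trans (by positivity) h1
    have h2 : 2 * (n:ℝ) ≤ Real.sqrt E := (Real.le_sqrt (by positivity) hE).mpr h1
    exact Nat.le_floor (by linarith)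
  · rintro ⟨m, ⟨hm, _⟩, rfl, hk⟩
    exact ⟨hm, (gs_ineq_iff E n k hm).mpr hk⟩

lemma gs_g_nonneg (E : ℝ) (n : ℕ) (h1 : 1 ≤ n) (h2 : n ≤ ⌊Real.sqrt E / 2⌋₊) :
    (n : ℤ) ≤ ⌊E / (4 * n)⌋ := by
  have hs : (0:ℝ) ≤ Real.sqrt E / 2 := by positivity
  have hn' : (n : ℝ) ≤ Real.sqrt E / 2 := le_trans (Nat.cast_le.mpr h2) (Nat.floor_le hs)
  have h1' : (1:ℝ) ≤ n := by exact_mod_cast h1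
  have hsp : (0:ℝ) < Real.sqrt E := by linarith
  have hE : (0:ℝ) ≤ E := by
    by_contra h
    rw [Real.sqrt_eq_zero_of_nonpos (by linarith)] at hsp; linarith
  have hsq : Real.sqrt E ^ 2 = E := Real.sq_sqrt hE
  have h4 : 4 * (n:ℝ) * n ≤ E := by nlinarith
  rw [Int.le_floor]
  push_cast
  rw [le_div_iff₀ (by positivity)]
  nlinarith

lemma gs_sum_sq (M : ℕ) : ∑ n ∈ Finset.Icc 1 M, ((2:ℝ) * n - 1) = (M:ℝ)^2 := by
  induction M with
  | zero => simp
  | succ m ih =>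
    rw [Finset.sum_Icc_succ_top (by omega), ih]
    push_cast; ring

lemma gs_card (E : ℝ) :
    (((Finset.Icc 1 ⌊Real.sqrt E / 2⌋₊).biUnion
      fun n => ({n} : Finset ℕ) ×ˢ Finset.Icc (-(gsg E n)) (gsg E n)).card : ℝ) =
    ∑ n ∈ Finset.Icc 1 ⌊Real.sqrt E / 2⌋₊, (2 * ((⌊E / (4 * n)⌋ : ℤ) : ℝ) - 2 * n + 1) := by
  rw [Finset.card_biUnion]
  · rw [Nat.cast_sum]
    refine Finset.sum_congr rfl fun n hn => ?_
    rw [Finset.mem_Icc] at hn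
    have hg : 0 ≤ gsg E n := by
      have := gs_g_nonneg E n hn.1 hn.2
      simp only [gsg]; omega
    rw [Finset.card_product, Finset.card_singleton, one_mul, Int.card_Icc]
    have : (gsg E n + 1 - -gsg E n) = 2 * gsg E n + 1 := by ring
    rw [this]
    have h2 : ((2 * gsg E n + 1).toNat : ℤ) = 2 * gsg E n + 1 := Int.toNat_of_nonneg (by omega)
    have h3 : ((2 * gsg E n + 1).toNat : ℝ) = ((2 * gsg E n + 1 : ℤ) : ℝ) := by exact_mod_cast h2
    rw [h3]
    simp only [gsg]
    push_cast
    ring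
  · intro x hx y hy hxy
    simp only [Finset.disjoint_left]
    rintro ⟨a, b⟩ hab hab'
    simp only [Finset.mem_product, Finset.mem_singleton] at hab hab'
    exact hxy (hab.1 ▸ hab'.1 ▸ rfl)

lemma gs_harmonic_sum (M : ℕ) :
    ((harmonic M : ℚ) : ℝ) = ∑ n ∈ Finset.Icc 1 M, (1:ℝ) / n := by
  rw [harmonic]
  push_cast
  rw [← Finset.Ico_add_one_right_eq_Icc, Finset.sum_Ico_eq_sum_range]
  refine Finset.sum_congr rfl fun i _ => ?_
  rw [one_div]
  push_cast
  rw [add_comm]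

lemma gs_harmonic_est (M : ℕ) (hM : 1 ≤ M) :
    |((harmonic M : ℚ) : ℝ) - Real.log M - Real.eulerMascheroniConstant| ≤ 1 / M := by
  have hM' : (1:ℝ) ≤ M := by exact_mod_cast hM
  have h1 : Real.eulerMascheroniConstant < Real.eulerMascheroniSeq' M :=
    Real.eulerMascheroniConstant_lt_eulerMascheroniSeq' M
  have h2 : Real.eulerMascheroniSeq M < Real.eulerMascheroniConstant :=
    Real.eulerMascheroniSeq_lt_eulerMascheroniConstant M
  rw [Real.eulerMascheroniSeq'] at h1
  rw [if_neg (by omega)] at h1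
  rw [Real.eulerMascheroniSeq] at h2
  have hlog : Real.log (M + 1) - Real.log M ≤ 1 / M := by
    rw [← Real.log_div (by positivity) (by positivity)]
    have := Real.log_le_sub_one_of_pos (x := ((M:ℝ)+1)/M) (by positivity)
    have h3 : ((M:ℝ)+1)/M - 1 = 1/M := by field_simp; ring
    linarith
  rw [abs_le]
  constructor <;> linarith

lemma gs_count (E : ℝ) :
    (({p : ℕ × ℤ | 0 < p.1 ∧ (4 * p.1 * ((p.1 : ℝ) + |(p.2 : ℝ)|) ≤ E)}.ncard : ℝ))
      = ∑ n ∈ Finset.Icc 1 ⌊Real.sqrt E / 2⌋₊,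
          (2 * ((⌊E / (4 * n)⌋ : ℤ) : ℝ) - 2 * n + 1) := by
  rw [gs_set_eq E, Set.ncard_coe_finset, gs_card E]

set_option maxHeartbeats 1000000 in
/-- Weyl's law with remainder for the Grushin sphere: as `E → +∞`,
`N(E) = (E/4)·log E + (γ − log 2 − 1/2)·(E/2) + O(√E)`, where `γ` is the
Euler–Mascheroni constant. -/
theorem grushin_sphere_weyl_law
    (N : ℝ → ℝ)
    (hN : ∀ E : ℝ, N E =
      Set.ncard {p : ℕ × ℤ | 0 < p.1 ∧ (4 * p.1 * ((p.1 : ℝ) + |(p.2 : ℝ)|) ≤ E)}) :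
    (fun E : ℝ => N E - (E / 4 * Real.log E +
        (Real.eulerMascheroniConstant - Real.log 2 - 1 / 2) * (E / 2)))
      =O[atTop] (fun E : ℝ => Real.sqrt E) := by
  rw [isBigO_iff]
  refine ⟨6, ?_⟩
  filter_upwards [eventually_ge_atTop (64:ℝ)] with E hE
  have hE0 : (0:ℝ) ≤ E := by linarith
  set s := Real.sqrt E with hs_def
  have hsE : s ^ 2 = E := Real.sq_sqrt hE0
  have hs8 : (8:ℝ) ≤ s := by
    have h64 : Real.sqrt 64 ≤ s := Real.sqrt_le_sqrt hE
    rwa [show (64:ℝ) = 8^2 by norm_num, Real.sqrt_sq (by norm_num)] at h64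
  set M := ⌊s / 2⌋₊ with hM_def
  have hM_le : (M:ℝ) ≤ s / 2 := Nat.floor_le (by positivity)
  have hM_gt : s / 2 - 1 < (M:ℝ) := by
    have := Nat.lt_floor_add_one (s/2)
    rw [← hM_def] at this
    linarith
  have hM1 : 1 ≤ M := by
    have h1 : (1:ℝ) ≤ (M:ℝ) := by linarith
    exact_mod_cast h1
  have hMpos : (0:ℝ) < (M:ℝ) := by linarith
  have hM4 : s / 4 ≤ (M:ℝ) := by linarith
  -- abbreviations
  set Tf : ℝ := ∑ n ∈ Finset.Icc 1 M, 2 * (((⌊E / (4 * n)⌋ : ℤ) : ℝ) - E / (4 * n)) with hTf_def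
  set H : ℝ := ((harmonic M : ℚ) : ℝ) with hH_def
  -- N E as an explicit sum
  have hNE : N E = Tf + (E/2) * H - (M:ℝ)^2 := by
    rw [hN E, gs_count E, ← hs_def, ← hM_def, hTf_def, hH_def, gs_harmonic_sum M,
      Finset.mul_sum, ← gs_sum_sq M, ← Finset.sum_add_distrib, ← Finset.sum_sub_distrib]
    refine Finset.sum_congr rfl fun n hn => ?_
    rw [Finset.mem_Icc] at hn
    have h1 : (1:ℝ) ≤ (n:ℝ) := by exact_mod_cast hn.1
    have hn0 : (0:ℝ) < (n:ℝ) := by linarith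
    field_simp
    ring
  -- bound on Tf
  have hT : |Tf| ≤ s := by
    have h1 : |Tf| ≤ ∑ n ∈ Finset.Icc 1 M, (2:ℝ) := by
      refine (Finset.abs_sum_le_sum_abs _ _).trans (Finset.sum_le_sum fun n _ => ?_)
      have hf1 := Int.floor_le (E / (4*(n:ℝ)))
      have hf2 := Int.sub_one_lt_floor (E / (4*(n:ℝ)))
      rw [abs_mul]
      have habs1 : |(((⌊E/(4*(n:ℝ))⌋ : ℤ)):ℝ) - E/(4*n)| ≤ 1 :=
        abs_le.mpr ⟨by linarith, by linarith⟩
      calc |(2:ℝ)| * |(((⌊E/(4*(n:ℝ))⌋ : ℤ)):ℝ) - E/(4*n)| ≤ |(2:ℝ)| * 1 := by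
            exact mul_le_mul_of_nonneg_left habs1 (abs_nonneg 2)
        _ = 2 := by rw [abs_two]; ring
    rw [Finset.sum_const, Nat.card_Icc, nsmul_eq_mul] at h1
    have h2 : ((M + 1 - 1 : ℕ):ℝ) = (M:ℝ) := by norm_num
    rw [h2] at h1
    linarith
  -- harmonic estimate
  have hH1 : |H - Real.log M - Real.eulerMascheroniConstant| ≤ 1 / M := gs_harmonic_est M hM1
  -- log difference
  have hlogd : |Real.log (s/2) - Real.log (M:ℝ)| ≤ 1 / M := by
    have hmono : Real.log (M:ℝ) ≤ Real.log (s/2) := Real.log_le_log hMpos hM_le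
    rw [abs_of_nonneg (by linarith)]
    rw [← Real.log_div (by positivity) (ne_of_gt hMpos)]
    have hle := Real.log_le_sub_one_of_pos (x := (s/2)/(M:ℝ)) (by positivity)
    have heq : (s/2)/(M:ℝ) - 1 = (s/2 - M)/M := by field_simp
    have hfin : (s/2 - (M:ℝ))/(M:ℝ) ≤ 1 / M := by gcongr; linarith
    linarith
  -- log of s/2
  have hlog_s : Real.log (s/2) = Real.log E / 2 - Real.log 2 := by
    rw [Real.log_div (by positivity) (by norm_num), hs_def, Real.log_sqrt hE0]
  -- square difference
  have hMsq : |E/4 - (M:ℝ)^2| ≤ s := by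
    have h1 : (M:ℝ)^2 ≤ E/4 := by nlinarith
    have h2 : E/4 - (M:ℝ)^2 ≤ s := by nlinarith
    rw [abs_of_nonneg (by linarith)]
    exact h2
  -- the algebraic identity
  have hiden : N E - (E / 4 * Real.log E +
      (Real.eulerMascheroniConstant - Real.log 2 - 1/2) * (E/2))
      = Tf + (E/2) * (H - Real.log M - Real.eulerMascheroniConstant)
        - (E/2) * (Real.log (s/2) - Real.log M) + (E/4 - (M:ℝ)^2) := by
    rw [hNE, hlog_s]
    ring
  -- final bound
  clear_value Tf H M s
  rw [Real.norm_eq_abs, Real.norm_eq_abs, hiden, abs_of_nonneg (by linarith : (0:ℝ) ≤ s)]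
  have hEnn : (0:ℝ) ≤ E/2 := by linarith
  have hb1 : |(E/2) * (H - Real.log M - Real.eulerMascheroniConstant)| ≤ 2 * s := by
    rw [abs_mul, abs_of_nonneg hEnn]
    have h1 : (E/2) * |H - Real.log M - Real.eulerMascheroniConstant| ≤ (E/2) * (1/M) :=
      mul_le_mul_of_nonneg_left hH1 hEnn
    have h2 : (E/2) * (1/(M:ℝ)) ≤ 2 * s := by
      rw [mul_one_div, div_le_iff₀ hMpos]
      have h3 : s * s ≤ s * (4*(M:ℝ)) := mul_le_mul_of_nonneg_left (by linarith) (by linarith)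
      nlinarith
    linarith
  have hb2 : |(E/2) * (Real.log (s/2) - Real.log M)| ≤ 2 * s := by
    rw [abs_mul, abs_of_nonneg hEnn]
    have h1 : (E/2) * |Real.log (s/2) - Real.log (M:ℝ)| ≤ (E/2) * (1/M) :=
      mul_le_mul_of_nonneg_left hlogd hEnn
    have h2 : (E/2) * (1/(M:ℝ)) ≤ 2 * s := by
      rw [mul_one_div, div_le_iff₀ hMpos]
      have h3 : s * s ≤ s * (4*(M:ℝ)) := mul_le_mul_of_nonneg_left (by linarith) (by linarith)
      nlinarith
    linarith
  calc |Tf + (E/2) * (H - Real.log M - Real.eulerMascheroniConstant)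
        - (E/2) * (Real.log (s/2) - Real.log M) + (E/4 - (M:ℝ)^2)|
      ≤ |Tf + (E/2) * (H - Real.log M - Real.eulerMascheroniConstant)
        - (E/2) * (Real.log (s/2) - Real.log M)| + |E/4 - (M:ℝ)^2| := abs_add_le _ _
    _ ≤ |Tf + (E/2) * (H - Real.log M - Real.eulerMascheroniConstant)|
        + |(E/2) * (Real.log (s/2) - Real.log M)| + |E/4 - (M:ℝ)^2| := by
          linarith [abs_sub (Tf + (E/2) * (H - Real.log M - Real.eulerMascheroniConstant))
            ((E/2) * (Real.log (s/2) - Real.log M))]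
    _ ≤ |Tf| + |(E/2) * (H - Real.log M - Real.eulerMascheroniConstant)|
        + |(E/2) * (Real.log (s/2) - Real.log M)| + |E/4 - (M:ℝ)^2| := by
          linarith [abs_add_le Tf ((E/2) * (H - Real.log M - Real.eulerMascheroniConstant))]
    _ ≤ 6 * s := by linarith
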